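/- arXiv:2107.04368 — 2 statements merged into one kernel-verified Lean document; each statement's English description precedes it below -/
import Mathlib

section
/- Let G=(W,E) be a simple undirected graph with W={w_1,…,w_{3q}} and let (N,V) be the instance of 3D-SR-AS-BIN constructed from G by the reduction. If G has a partition into triangles, then (N,V) contains a stable matching M with |M| = |N|/3 = 13q (i.e., in which every agent is matched). -/
open Finset

variable {A : Type*}

/-- `M` is a matching on agent set `N`: a set of pairwise disjoint triples of agents of `N`. -/
def IsMatching [DecidableEq A] (N : Finset A) (M : Finset (Finset A)) : Prop :=
  (∀ t ∈ M, t.card = 3 ∧ t ⊆ N) ∧ ∀ t ∈ M, ∀ s ∈ M, t ≠ s → Disjoint t s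

/-- The (additively separable) utility of agent `a` in matching `M` under valuations `val`:
the sum, over the triples of `M` containing `a`, of the valuations by `a` of the other
members; this is `0` if `a` is unmatched, and for a genuine matching it is the sum of the
valuations of `a`'s two partners. -/
def utility [DecidableEq A] (val : A → A → ℤ) (M : Finset (Finset A)) (a : A) : ℤ :=
  ∑ t ∈ M.filter (fun t => a ∈ t), ∑ b ∈ t.erase a, val a b

/-- The triple consisting of the three distinct agents `x, y, z` of `N` blocks `M`. -/
def Blocks [DecidableEq A] (N : Finset A) (val : A → A → ℤ) (M : Finset (Finset A))
    (x y z : A) : Prop :=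
  x ∈ N ∧ y ∈ N ∧ z ∈ N ∧ x ≠ y ∧ x ≠ z ∧ y ≠ z ∧
  utility val M x < val x y + val x z ∧
  utility val M y < val y x + val y z ∧
  utility val M z < val z x + val z y

/-- `M` is stable: no triple of agents of `N` blocks it. -/
def IsStable [DecidableEq A] (N : Finset A) (val : A → A → ℤ) (M : Finset (Finset A)) : Prop :=
  ∀ x y z : A, ¬ Blocks N val M x y z

/-- Binary symmetric preferences on `N`. -/
def BinSym [DecidableEq A] (N : Finset A) (val : A → A → ℤ) : Prop :=
  (∀ a ∈ N, ∀ b ∈ N, a ≠ b → val a b = 0 ∨ val a b = 1) ∧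
  (∀ a ∈ N, ∀ b ∈ N, val a b = val b a)

/-- A `P`-matching: a matching in which every matched agent has strictly positive utility. -/
def IsPMatching [DecidableEq A] (N : Finset A) (val : A → A → ℤ)
    (M : Finset (Finset A)) : Prop :=
  IsMatching N M ∧ ∀ a : A, (∃ t ∈ M, a ∈ t) → 0 < utility val M a

/-- `x, y, z` form a triangle: three distinct agents of `N` whose pairwise valuations
all equal `1`. -/
def IsTriangle [DecidableEq A] (N : Finset A) (val : A → A → ℤ) (x y z : A) : Prop :=
  x ∈ N ∧ y ∈ N ∧ z ∈ N ∧ x ≠ y ∧ x ≠ z ∧ y ≠ z ∧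
  val x y = 1 ∧ val y z = 1 ∧ val x z = 1

/-- The instance contains no triangle. -/
def TriangleFree [DecidableEq A] (N : Finset A) (val : A → A → ℤ) : Prop :=
  ∀ x y z : A, ¬ IsTriangle N val x y z

open Finset

/-- The agents of the instance constructed by the reduction from
Partition Into Triangles: `a i s` (for `s : Fin 2`), `b i` for each vertex `i`,
and pentagadget agents `p r t` (`t : Fin 5`, representing `p_r^{t+1}`). -/
inductive Agent (q : ℕ) : Type where
  | a : Fin (3*q) → Fin 2 → Agent q
  | b : Fin (3*q) → Agent q
  | p : Fin (6*q) → Fin 5 → Agent q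
  deriving DecidableEq, Fintype

/-- The valuation function of the instance constructed by the reduction from the graph `G`.
Note that, within a pentagadget, `p_r^t` assigns valuation `1` exactly to
`p_r^{t+1}, p_r^{t+2}, p_r^{t+4}` (indices mod 5). -/
def redVal (q : ℕ) (G : SimpleGraph (Fin (3*q))) [DecidableRel G.Adj] :
    Agent q → Agent q → ℤ
  | .a i s, .a j s' => if i = j ∧ s ≠ s' then 1 else 0
  | .a i _, .b j => if i = j then 1 else 0
  | .b i, .a j _ => if i = j then 1 else 0
  | .b i, .b j => if G.Adj i j then 1 else 0
  | .p r t, .p r' t' => if r = r' ∧ (t' - t = 1 ∨ t' - t = 2 ∨ t' - t = 4) then 1 else 0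
  | _, _ => 0

/-- A partition of the vertices of `G` into triangles. -/
def IsTrianglePartition {n : ℕ} (G : SimpleGraph (Fin n))
    (X : Finset (Finset (Fin n))) : Prop :=
  (∀ t ∈ X, t.card = 3 ∧ ∀ u ∈ t, ∀ v ∈ t, u ≠ v → G.Adj u v) ∧
  (∀ t ∈ X, ∀ s ∈ X, t ≠ s → Disjoint t s) ∧
  ∀ v : Fin n, ∃ t ∈ X, v ∈ t

namespace RedHelper
open Finset

variable {q : ℕ}

/-- Encoding of an a-agent index as a pentagon index. -/
def e (q : ℕ) (i : Fin (3*q)) (s : Fin 2) : Fin (6*q) :=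
  ⟨2 * i.val + s.val, by have := i.isLt; have := s.isLt; omega⟩

lemma e_inj {i j : Fin (3*q)} {s s' : Fin 2} (h : e q i s = e q j s') :
    i = j ∧ s = s' := by
  have h' : 2 * i.val + s.val = 2 * j.val + s'.val := congrArg Fin.val h
  have hs := s.isLt; have hs' := s'.isLt
  exact ⟨Fin.ext (by omega), Fin.ext (by omega)⟩

lemma e_surj (r : Fin (6*q)) : ∃ i s, e q i s = r := by
  have hr := r.isLt
  exact ⟨⟨r.val / 2, by omega⟩, ⟨r.val % 2, by omega⟩, Fin.ext (by simp [e]; omega)⟩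

def Ta (i : Fin (3*q)) (s : Fin 2) : Finset (Agent q) :=
  {.p (e q i s) 3, .p (e q i s) 4, .a i s}

def Tp (r : Fin (6*q)) : Finset (Agent q) := {.p r 0, .p r 1, .p r 2}

def Tb (u : Finset (Fin (3*q))) : Finset (Agent q) := u.image Agent.b

/-- The stable matching. -/
def Mch (q : ℕ) (X : Finset (Finset (Fin (3*q)))) : Finset (Finset (Agent q)) :=
  X.image Tb ∪ (univ.image (Tp (q := q))) ∪
    univ.image (fun is : Fin (3*q) × Fin 2 => Ta is.1 is.2)

-- membership lemmas
@[simp] lemma a_mem_Tb {i s u} : (Agent.a i s ∈ Tb (q := q) u) ↔ False := by simp [Tb]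
@[simp] lemma p_mem_Tb {r t u} : (Agent.p r t ∈ Tb (q := q) u) ↔ False := by simp [Tb]
@[simp] lemma b_mem_Tb {i u} : (Agent.b i ∈ Tb (q := q) u) ↔ i ∈ u := by
  simp [Tb, eq_comm]

@[simp] lemma a_mem_Tp {i s r} : (Agent.a i s ∈ Tp (q := q) r) ↔ False := by simp [Tp]
@[simp] lemma b_mem_Tp {i r} : (Agent.b i ∈ Tp (q := q) r) ↔ False := by simp [Tp]
@[simp] lemma p_mem_Tp {r' t r} :
    (Agent.p r' t ∈ Tp (q := q) r) ↔ r' = r ∧ (t = 0 ∨ t = 1 ∨ t = 2) := by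
  simp [Tp, and_or_left]

@[simp] lemma b_mem_Ta {j i s} : (Agent.b j ∈ Ta (q := q) i s) ↔ False := by simp [Ta]
@[simp] lemma a_mem_Ta {j s' i s} :
    (Agent.a j s' ∈ Ta (q := q) i s) ↔ j = i ∧ s' = s := by simp [Ta]
@[simp] lemma p_mem_Ta {r t i s} :
    (Agent.p r t ∈ Ta (q := q) i s) ↔ r = e q i s ∧ (t = 3 ∨ t = 4) := by
  simp [Ta, and_or_left]

lemma mem_Mch_iff {X} {t : Finset (Agent q)} :
    t ∈ Mch q X ↔ (∃ u ∈ X, t = Tb u) ∨ (∃ r, t = Tp r) ∨ ∃ i s, t = Ta i s := by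
  simp [Mch, eq_comm]

lemma Tb_mem_Mch {X} {u} (hu : u ∈ X) : Tb (q := q) u ∈ Mch q X :=
  mem_Mch_iff.2 (Or.inl ⟨u, hu, rfl⟩)
lemma Tp_mem_Mch {X} (r : Fin (6*q)) : Tp r ∈ Mch q X :=
  mem_Mch_iff.2 (Or.inr (Or.inl ⟨r, rfl⟩))
lemma Ta_mem_Mch {X} (i : Fin (3*q)) (s : Fin 2) : Ta i s ∈ Mch q X :=
  mem_Mch_iff.2 (Or.inr (Or.inr ⟨i, s, rfl⟩))


section
variable {X : Finset (Finset (Fin (3*q)))}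

lemma filter_a (X : Finset (Finset (Fin (3*q)))) (i : Fin (3*q)) (s : Fin 2) :
    (Mch q X).filter (fun t => Agent.a i s ∈ t) = {Ta i s} := by
  ext t
  simp only [mem_filter, mem_singleton]
  constructor
  · rintro ⟨ht, hm⟩
    rcases mem_Mch_iff.1 ht with ⟨u, hu, rfl⟩ | ⟨r, rfl⟩ | ⟨j, s', rfl⟩
    · simp at hm
    · simp at hm
    · obtain ⟨rfl, rfl⟩ := a_mem_Ta.1 hm; rfl
  · rintro rfl
    exact ⟨Ta_mem_Mch i s, by simp⟩

lemma filter_b (hX : IsTrianglePartition G X) {u} (hu : u ∈ X) {i} (hi : i ∈ u) :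
    (Mch q X).filter (fun t => Agent.b i ∈ t) = {Tb u} := by
  ext t
  simp only [mem_filter, mem_singleton]
  constructor
  · rintro ⟨ht, hm⟩
    rcases mem_Mch_iff.1 ht with ⟨u', hu', rfl⟩ | ⟨r, rfl⟩ | ⟨j, s', rfl⟩
    · have hi' : i ∈ u' := b_mem_Tb.1 hm
      have : u' = u := by
        by_contra hne
        exact Finset.disjoint_left.1 (hX.2.1 u' hu' u hu hne) hi' hi
      rw [this]
    · simp at hm
    · simp at hm
  · rintro rfl
    exact ⟨Tb_mem_Mch hu, b_mem_Tb.2 hi⟩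

lemma filter_p012 (X : Finset (Finset (Fin (3*q)))) (r : Fin (6*q)) {t : Fin 5}
    (ht : t = 0 ∨ t = 1 ∨ t = 2) :
    (Mch q X).filter (fun u => Agent.p r t ∈ u) = {Tp r} := by
  ext u
  simp only [mem_filter, mem_singleton]
  constructor
  · rintro ⟨hu, hm⟩
    rcases mem_Mch_iff.1 hu with ⟨v, hv, rfl⟩ | ⟨r', rfl⟩ | ⟨j, s', rfl⟩
    · simp at hm
    · obtain ⟨rfl, -⟩ := p_mem_Tp.1 hm; rfl
    · obtain ⟨-, ht'⟩ := p_mem_Ta.1 hm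
      rcases ht with rfl | rfl | rfl <;> rcases ht' with h | h <;> exact absurd h (by decide)
  · rintro rfl
    exact ⟨Tp_mem_Mch r, p_mem_Tp.2 ⟨rfl, ht⟩⟩

lemma filter_p34 (X : Finset (Finset (Fin (3*q)))) (i : Fin (3*q)) (s : Fin 2) {t : Fin 5}
    (ht : t = 3 ∨ t = 4) :
    (Mch q X).filter (fun u => Agent.p (e q i s) t ∈ u) = {Ta i s} := by
  ext u
  simp only [mem_filter, mem_singleton]
  constructor
  · rintro ⟨hu, hm⟩
    rcases mem_Mch_iff.1 hu with ⟨v, hv, rfl⟩ | ⟨r', rfl⟩ | ⟨j, s', rfl⟩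
    · simp at hm
    · obtain ⟨-, ht'⟩ := p_mem_Tp.1 hm
      rcases ht with rfl | rfl <;> rcases ht' with h | h | h <;> exact absurd h (by decide)
    · obtain ⟨he, -⟩ := p_mem_Ta.1 hm
      obtain ⟨rfl, rfl⟩ := e_inj he
      rfl
  · rintro rfl
    exact ⟨Ta_mem_Mch i s, p_mem_Ta.2 ⟨rfl, ht⟩⟩

end

section
variable (G : SimpleGraph (Fin (3*q))) [inst : DecidableRel G.Adj]

lemma redVal_aa (i j : Fin (3*q)) (s s' : Fin 2) :
    redVal q G (.a i s) (.a j s') = if i = j ∧ s ≠ s' then 1 else 0 := rfl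
lemma redVal_ab (i j : Fin (3*q)) (s : Fin 2) :
    redVal q G (.a i s) (.b j) = if i = j then 1 else 0 := rfl
lemma redVal_ap (i : Fin (3*q)) (s : Fin 2) (r : Fin (6*q)) (t : Fin 5) :
    redVal q G (.a i s) (.p r t) = 0 := rfl
lemma redVal_ba (i j : Fin (3*q)) (s : Fin 2) :
    redVal q G (.b i) (.a j s) = if i = j then 1 else 0 := rfl
lemma redVal_bb (i j : Fin (3*q)) :
    redVal q G (.b i) (.b j) = if G.Adj i j then 1 else 0 := rfl
lemma redVal_bp (i : Fin (3*q)) (r : Fin (6*q)) (t : Fin 5) :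
    redVal q G (.b i) (.p r t) = 0 := rfl
lemma redVal_pa (i : Fin (3*q)) (s : Fin 2) (r : Fin (6*q)) (t : Fin 5) :
    redVal q G (.p r t) (.a i s) = 0 := rfl
lemma redVal_pb (i : Fin (3*q)) (r : Fin (6*q)) (t : Fin 5) :
    redVal q G (.p r t) (.b i) = 0 := rfl
lemma redVal_pp (r r' : Fin (6*q)) (t t' : Fin 5) :
    redVal q G (.p r t) (.p r' t') =
      if r = r' ∧ (t' - t = 1 ∨ t' - t = 2 ∨ t' - t = 4) then 1 else 0 := rfl

lemma redVal_self (x : Agent q) : redVal q G x x = 0 := by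
  rcases x with ⟨i, s⟩ | i | ⟨r, t⟩
  · simp [redVal_aa]
  · simp [redVal_bb]
  · rw [redVal_pp, if_neg]
    rintro ⟨-, h | h | h⟩ <;> rw [sub_self] at h <;> exact absurd h (by decide)

lemma redVal_nonneg (x y : Agent q) : 0 ≤ redVal q G x y := by
  rcases x with ⟨i, s⟩ | i | ⟨r, t⟩ <;> rcases y with ⟨j, s'⟩ | j | ⟨r', t'⟩ <;>
    first
      | (rw [redVal_aa]; split_ifs <;> norm_num)
      | (rw [redVal_ab]; split_ifs <;> norm_num)
      | (rw [redVal_ap])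
      | (rw [redVal_ba]; split_ifs <;> norm_num)
      | (rw [redVal_bb]; split_ifs <;> norm_num)
      | (rw [redVal_bp])
      | (rw [redVal_pa])
      | (rw [redVal_pb])
      | (rw [redVal_pp]; split_ifs <;> norm_num)

lemma redVal_le_one (x y : Agent q) : redVal q G x y ≤ 1 := by
  rcases x with ⟨i, s⟩ | i | ⟨r, t⟩ <;> rcases y with ⟨j, s'⟩ | j | ⟨r', t'⟩ <;>
    first
      | (rw [redVal_aa]; split_ifs <;> norm_num)
      | (rw [redVal_ab]; split_ifs <;> norm_num)
      | (rw [redVal_ap]; norm_num)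
      | (rw [redVal_ba]; split_ifs <;> norm_num)
      | (rw [redVal_bb]; split_ifs <;> norm_num)
      | (rw [redVal_bp]; norm_num)
      | (rw [redVal_pa]; norm_num)
      | (rw [redVal_pb]; norm_num)
      | (rw [redVal_pp]; split_ifs <;> norm_num)

end

lemma utility_filter {val : Agent q → Agent q → ℤ} {M : Finset (Finset (Agent q))}
    {x : Agent q} {T : Finset (Agent q)} (h : M.filter (fun t => x ∈ t) = {T}) :
    utility val M x = ∑ b ∈ T.erase x, val x b := by
  rw [utility, h, sum_singleton]

section
variable (G : SimpleGraph (Fin (3*q))) [inst : DecidableRel G.Adj]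
variable (X : Finset (Finset (Fin (3*q))))

lemma sum_erase_self (x : Agent q) (T : Finset (Agent q)) :
    ∑ b ∈ T.erase x, redVal q G x b = ∑ b ∈ T, redVal q G x b :=
  Finset.sum_erase _ (redVal_self G x)

lemma util_a (i : Fin (3*q)) (s : Fin 2) :
    utility (redVal q G) (Mch q X) (.a i s) = 0 := by
  rw [utility_filter (filter_a X i s), sum_erase_self, Ta,
    Finset.sum_insert (by simp), Finset.sum_insert (by simp), Finset.sum_singleton,
    redVal_ap, redVal_ap, redVal_aa, if_neg (by simp)]
  norm_num

lemma util_b (hX : IsTrianglePartition G X) {u} (hu : u ∈ X) {i} (hi : i ∈ u) :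
    utility (redVal q G) (Mch q X) (.b i) = 2 := by
  rw [utility_filter (filter_b hX hu hi), sum_erase_self, Tb,
    Finset.sum_image (fun x _ y _ h => by simpa using h),
    ← Finset.add_sum_erase _ _ hi, redVal_self]
  have h1 : ∀ j ∈ u.erase i, redVal q G (.b i) (.b j) = 1 := by
    intro j hj
    rw [redVal_bb, if_pos]
    exact (hX.1 u hu).2 i hi j (Finset.mem_of_mem_erase hj)
      (Ne.symm (Finset.ne_of_mem_erase hj))
  rw [Finset.sum_congr rfl h1, Finset.sum_const, Finset.card_erase_of_mem hi,
    (hX.1 u hu).1]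
  norm_num

lemma util_p0 (r : Fin (6*q)) : utility (redVal q G) (Mch q X) (.p r 0) = 2 := by
  rw [utility_filter (filter_p012 X r (Or.inl rfl)), sum_erase_self, Tp,
    Finset.sum_insert (by simp), Finset.sum_insert (by simp), Finset.sum_singleton,
    redVal_self, redVal_pp, redVal_pp, if_pos ⟨rfl, by decide⟩, if_pos ⟨rfl, by decide⟩]
  norm_num

lemma util_p1 (r : Fin (6*q)) : utility (redVal q G) (Mch q X) (.p r 1) = 2 := by
  rw [utility_filter (filter_p012 X r (Or.inr (Or.inl rfl))), sum_erase_self, Tp,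
    Finset.sum_insert (by simp), Finset.sum_insert (by simp), Finset.sum_singleton,
    redVal_self, redVal_pp, redVal_pp, if_pos ⟨rfl, by decide⟩, if_pos ⟨rfl, by decide⟩]
  norm_num

lemma util_p2 (r : Fin (6*q)) : utility (redVal q G) (Mch q X) (.p r 2) = 1 := by
  rw [utility_filter (filter_p012 X r (Or.inr (Or.inr rfl))), sum_erase_self, Tp,
    Finset.sum_insert (by simp), Finset.sum_insert (by simp), Finset.sum_singleton,
    redVal_self, redVal_pp, redVal_pp, if_neg (by rintro ⟨-, h⟩; revert h; decide),
    if_pos ⟨rfl, by decide⟩]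
  norm_num

lemma util_p3 (i : Fin (3*q)) (s : Fin 2) :
    utility (redVal q G) (Mch q X) (.p (e q i s) 3) = 1 := by
  rw [utility_filter (filter_p34 X i s (Or.inl rfl)), sum_erase_self, Ta,
    Finset.sum_insert (by simp), Finset.sum_insert (by simp), Finset.sum_singleton,
    redVal_self, redVal_pp, redVal_pa, if_pos ⟨rfl, by decide⟩]
  norm_num

lemma util_p4 (i : Fin (3*q)) (s : Fin 2) :
    utility (redVal q G) (Mch q X) (.p (e q i s) 4) = 1 := by
  rw [utility_filter (filter_p34 X i s (Or.inr rfl)), sum_erase_self, Ta,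
    Finset.sum_insert (by simp), Finset.sum_insert (by simp), Finset.sum_singleton,
    redVal_self, redVal_pp, redVal_pa, if_pos ⟨rfl, by decide⟩]
  norm_num

lemma util_p (r : Fin (6*q)) (t : Fin 5) :
    utility (redVal q G) (Mch q X) (.p r t) = if t.val ≤ 1 then 2 else 1 := by
  obtain ⟨i, s, rfl⟩ := e_surj r
  fin_cases t <;>
    simp [util_p0, util_p1, util_p2, util_p3, util_p4]

end

lemma b_inj : Function.Injective (Agent.b (q := q)) := fun i j h => by simpa using h

section
variable (G : SimpleGraph (Fin (3*q))) [inst : DecidableRel G.Adj]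
variable {X : Finset (Finset (Fin (3*q)))}

lemma eq_of_mem_mem (hX : IsTrianglePartition G X) {t s : Finset (Agent q)} {x : Agent q}
    (ht : t ∈ Mch q X) (hs : s ∈ Mch q X) (hxt : x ∈ t) (hxs : x ∈ s) : t = s := by
  obtain ⟨T, hT⟩ : ∃ T, (Mch q X).filter (fun v => x ∈ v) = {T} := by
    rcases x with ⟨i, s'⟩ | i | ⟨r, u⟩
    · exact ⟨_, filter_a X i s'⟩
    · obtain ⟨w, hw, hiw⟩ := hX.2.2 i
      exact ⟨_, filter_b hX hw hiw⟩
    · obtain ⟨i, s', rfl⟩ := e_surj r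
      have h5 : ∀ v : Fin 5, v = 0 ∨ v = 1 ∨ v = 2 ∨ v = 3 ∨ v = 4 := by decide
      rcases h5 u with h | h | h | h | h
      · exact ⟨_, filter_p012 X _ (Or.inl h)⟩
      · exact ⟨_, filter_p012 X _ (Or.inr (Or.inl h))⟩
      · exact ⟨_, filter_p012 X _ (Or.inr (Or.inr h))⟩
      · exact ⟨_, filter_p34 X i s' (Or.inl h)⟩
      · exact ⟨_, filter_p34 X i s' (Or.inr h)⟩
  have h1 : t ∈ (Mch q X).filter (fun v => x ∈ v) := mem_filter.2 ⟨ht, hxt⟩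
  have h2 : s ∈ (Mch q X).filter (fun v => x ∈ v) := mem_filter.2 ⟨hs, hxs⟩
  rw [hT, mem_singleton] at h1 h2
  rw [h1, h2]

lemma isMatching_Mch (hX : IsTrianglePartition G X) :
    IsMatching (Finset.univ : Finset (Agent q)) (Mch q X) := by
  constructor
  · intro t ht
    refine ⟨?_, subset_univ t⟩
    rcases mem_Mch_iff.1 ht with ⟨u, hu, rfl⟩ | ⟨r, rfl⟩ | ⟨i, s, rfl⟩
    · rw [Tb, Finset.card_image_of_injective _ b_inj, (hX.1 u hu).1]
    · rw [Tp, Finset.card_insert_of_notMem (by simp),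
        Finset.card_insert_of_notMem (by simp), Finset.card_singleton]
    · rw [Ta, Finset.card_insert_of_notMem (by simp),
        Finset.card_insert_of_notMem (by simp), Finset.card_singleton]
  · intro t ht s hs hne
    rw [Finset.disjoint_left]
    intro x hxt hxs
    exact hne (eq_of_mem_mem G hX ht hs hxt hxs)

lemma card_Mch (hX : IsTrianglePartition G X) : (Mch q X).card = 13 * q := by
  have hTb_inj : Function.Injective (Tb (q := q)) := fun u v h =>
    Finset.image_injective b_inj (by simpa [Tb] using h)
  have hXq : X.card = q := by
    have hcov : X.biUnion (fun u => u) = Finset.univ := by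
      ext v
      simpa using hX.2.2 v
    have hbc := Finset.card_biUnion (fun u hu v hv h => hX.2.1 u hu v hv h)
    rw [hcov, card_univ, Fintype.card_fin] at hbc
    have hsum : ∑ u ∈ X, u.card = ∑ u ∈ X, 3 :=
      Finset.sum_congr rfl (fun u hu => (hX.1 u hu).1)
    rw [hsum, Finset.sum_const, smul_eq_mul] at hbc
    omega
  have d1 : Disjoint (X.image Tb) ((univ : Finset (Fin (6*q))).image (Tp (q := q))) := by
    rw [Finset.disjoint_left]
    rintro t h1 h2
    obtain ⟨u, -, hbu⟩ := Finset.mem_image.1 h1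
    obtain ⟨r, -, hpr⟩ := Finset.mem_image.1 h2
    have : Agent.p r 0 ∈ Tb u := by rw [hbu, ← hpr]; simp [Tp]
    simp at this
  have d2 : Disjoint (X.image Tb ∪ (univ : Finset (Fin (6*q))).image (Tp (q := q)))
      ((univ : Finset (Fin (3*q) × Fin 2)).image (fun is => Ta is.1 is.2)) := by
    rw [Finset.disjoint_left]
    rintro t h1 h2
    obtain ⟨is, -, hta⟩ := Finset.mem_image.1 h2
    have hta' : Ta is.1 is.2 = t := hta
    rcases Finset.mem_union.1 h1 with h | h
    · obtain ⟨u, -, hbu⟩ := Finset.mem_image.1 h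
      have : Agent.a is.1 is.2 ∈ Tb u := by rw [hbu, ← hta']; simp
      simp at this
    · obtain ⟨r, -, hpr⟩ := Finset.mem_image.1 h
      have : Agent.a is.1 is.2 ∈ Tp r := by rw [hpr, ← hta']; simp
      simp at this
  rw [Mch, Finset.card_union_of_disjoint d2, Finset.card_union_of_disjoint d1]
  have c1 : (X.image Tb).card = q := by
    rw [Finset.card_image_of_injective _ hTb_inj, hXq]
  have c2 : ((univ : Finset (Fin (6*q))).image (Tp (q := q))).card = 6 * q := by
    rw [Finset.card_image_of_injective, card_univ, Fintype.card_fin]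
    intro r r' h
    have : Agent.p r 0 ∈ Tp r' := by rw [← h]; simp [Tp]
    exact (p_mem_Tp.1 this).1
  have c3 : ((univ : Finset (Fin (3*q) × Fin 2)).image
      (fun is : Fin (3*q) × Fin 2 => Ta is.1 is.2)).card = 6 * q := by
    rw [Finset.card_image_of_injective, card_univ]
    · simp [Fintype.card_prod]; ring
    · rintro ⟨i, s⟩ ⟨j, s'⟩ h
      have h' : Ta i s = Ta j s' := h
      have : Agent.a i s ∈ Ta j s' := by rw [← h']; simp
      obtain ⟨rfl, rfl⟩ := a_mem_Ta.1 this
      rfl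
  rw [c1, c2, c3]
  ring

end

section
variable (G : SimpleGraph (Fin (3*q))) [inst : DecidableRel G.Adj]
variable {X : Finset (Finset (Fin (3*q)))}

lemma fin2_eq {a b c : Fin 2} (h1 : b ≠ a) (h2 : c ≠ a) : b = c := by
  revert h1 h2; revert a b c; decide

lemma pos_cases {P Q : Prop} [Decidable P] [Decidable Q]
    (h : (0 : ℤ) < (if P then 1 else 0) + (if Q then 1 else 0)) : P ∨ Q := by
  by_contra hc
  push_neg at hc
  rw [if_neg hc.1, if_neg hc.2] at h
  omega

lemma pentagon_key : ∀ a b c : Fin 5, a ≠ b → a ≠ c → b ≠ c →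
    ((if a.val ≤ 1 then (2:ℤ) else 1) <
      (if (b - a = 1 ∨ b - a = 2 ∨ b - a = 4) then 1 else 0) +
      (if (c - a = 1 ∨ c - a = 2 ∨ c - a = 4) then 1 else 0)) →
    ((if b.val ≤ 1 then (2:ℤ) else 1) <
      (if (a - b = 1 ∨ a - b = 2 ∨ a - b = 4) then 1 else 0) +
      (if (c - b = 1 ∨ c - b = 2 ∨ c - b = 4) then 1 else 0)) →
    ((if c.val ≤ 1 then (2:ℤ) else 1) <
      (if (a - c = 1 ∨ a - c = 2 ∨ a - c = 4) then 1 else 0) +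
      (if (b - c = 1 ∨ b - c = 2 ∨ b - c = 4) then 1 else 0)) → False := by decide

lemma isStable_Mch (hX : IsTrianglePartition G X) :
    IsStable (Finset.univ : Finset (Agent q)) (redVal q G) (Mch q X) := by
  rintro x y z ⟨-, -, -, hxy, hxz, hyz, ux, uy, uz⟩
  have hb : ∀ (i : Fin (3*q)) (u v : Agent q),
      ¬ (utility (redVal q G) (Mch q X) (.b i) < redVal q G (.b i) u + redVal q G (.b i) v) := by
    intro i u v h
    obtain ⟨w, hw, hiw⟩ := hX.2.2 i
    rw [util_b G X hX hw hiw] at h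
    have h1 := redVal_le_one G (Agent.b i) u
    have h2 := redVal_le_one G (Agent.b i) v
    omega
  have hp1 : ∀ (r : Fin (6*q)) (t : Fin 5),
      1 ≤ utility (redVal q G) (Mch q X) (.p r t) := by
    intro r t
    rw [util_p]
    split_ifs <;> norm_num
  rcases x with ⟨i, s⟩ | i | ⟨r, t⟩
  · -- x = a i s
    rcases y with ⟨j, s'⟩ | j | ⟨r', t'⟩
    · rcases z with ⟨k, s''⟩ | k | ⟨r'', t''⟩
      · -- aaa
        rw [util_a, redVal_aa, redVal_aa] at ux
        rw [util_a, redVal_aa, redVal_aa] at uy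
        rw [util_a, redVal_aa, redVal_aa] at uz
        rcases pos_cases ux with ⟨h1, hss'⟩ | ⟨h1, hss''⟩
        · rcases pos_cases uz with ⟨h2, h⟩ | ⟨h2, h⟩
          · exact hyz (by rw [fin2_eq (Ne.symm hss') h, (h2.trans h1).symm])
          · exact hxz (by rw [h1.trans h2.symm, ← fin2_eq h hss'])
        · rcases pos_cases uy with ⟨h2, h⟩ | ⟨h2, h⟩
          · exact hyz (by rw [fin2_eq h (Ne.symm hss''), h2.trans h1])
          · exact hxy (by rw [(h2.trans h1.symm).symm, ← fin2_eq h hss''])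
      · exact hb k (.a i s) (.a j s') uz
      · rw [redVal_pa, redVal_pa] at uz
        have := hp1 r'' t''
        omega
    · exact hb j (.a i s) z uy
    · rcases z with ⟨k, s''⟩ | k | ⟨r'', t''⟩
      · rw [redVal_pa, redVal_pa] at uy
        have := hp1 r' t'
        omega
      · exact hb k (.a i s) (.p r' t') uz
      · rw [util_a, redVal_ap, redVal_ap] at ux
        omega
  · exact hb i y z ux
  · -- x = p r t
    rcases y with ⟨j, s'⟩ | j | ⟨r', t'⟩
    · rcases z with ⟨k, s''⟩ | k | ⟨r'', t''⟩
      · rw [util_p, redVal_pa, redVal_pa] at ux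
        split_ifs at ux <;> omega
      · exact hb k (.p r t) (.a j s') uz
      · rw [util_a, redVal_ap, redVal_ap] at uy
        omega
    · exact hb j (.p r t) z uy
    · rcases z with ⟨k, s''⟩ | k | ⟨r'', t''⟩
      · rw [util_a, redVal_ap, redVal_ap] at uz
        omega
      · exact hb k (.p r t) (.p r' t') uz
      · -- ppp
        by_cases h1 : r = r'
        · subst h1
          by_cases h2 : r = r''
          · subst h2
            have htt' : t ≠ t' := fun h => hxy (by rw [h])
            have htt'' : t ≠ t'' := fun h => hxz (by rw [h])
            have ht't'' : t' ≠ t'' := fun h => hyz (by rw [h])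
            rw [util_p, redVal_pp, redVal_pp] at ux uy uz
            simp only [eq_self_iff_true, true_and] at ux uy uz
            exact pentagon_key t t' t'' htt' htt'' ht't''  ux uy uz
          · have e1 : redVal q G (.p r'' t'') (.p r t) = 0 := by
              rw [redVal_pp, if_neg]; exact fun hc => h2 hc.1.symm
            have e2 : redVal q G (.p r'' t'') (.p r t') = 0 := by
              rw [redVal_pp, if_neg]; exact fun hc => h2 hc.1.symm
            rw [e1, e2] at uz
            have := hp1 r'' t''
            omega
        · by_cases h2 : r = r''
          · subst h2
            have e1 : redVal q G (.p r' t') (.p r t) = 0 := by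
              rw [redVal_pp, if_neg]; exact fun hc => h1 hc.1.symm
            have e2 : redVal q G (.p r' t') (.p r t'') = 0 := by
              rw [redVal_pp, if_neg]; exact fun hc => h1 hc.1.symm
            rw [e1, e2] at uy
            have := hp1 r' t'
            omega
          · have e1 : redVal q G (.p r t) (.p r' t') = 0 := by
              rw [redVal_pp, if_neg]; exact fun hc => h1 hc.1
            have e2 : redVal q G (.p r t) (.p r'' t'') = 0 := by
              rw [redVal_pp, if_neg]; exact fun hc => h2 hc.1
            rw [e1, e2] at ux
            have := hp1 r t
            omega

end
end RedHelper

/-- If `G` has a partition into triangles, then the instance constructed by the reduction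
contains a stable matching in which every agent is matched, i.e. of cardinality
`|N|/3 = 13q`. -/
theorem stable_matching_of_trianglePartition
    (q : ℕ) (G : SimpleGraph (Fin (3*q))) [DecidableRel G.Adj]
    (hG : ∃ X, IsTrianglePartition G X) :
    ∃ M : Finset (Finset (Agent q)),
      IsMatching (Finset.univ : Finset (Agent q)) M ∧
      IsStable Finset.univ (redVal q G) M ∧ M.card = 13 * q := by
  obtain ⟨X, hX⟩ := hG
  exact ⟨RedHelper.Mch q X, RedHelper.isMatching_Mch G hX,
    RedHelper.isStable_Mch G hX, RedHelper.card_Mch G hX⟩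
end

section
/- Let G=(W,E) be a simple undirected graph with W={w_1,…,w_{3q}} and let (N,V) be the instance of 3D-SR-AS-BIN constructed from G by the reduction. If (N,V) contains a stable matching M with |M| = |N|/3, then G has a partition into triangles. -/
open Finset

variable {A : Type*}

open Finset

section AuxRed
open Finset
variable {q : ℕ} {G : SimpleGraph (Fin (3 * q))} [DecidableRel G.Adj]
variable {M : Finset (Finset (Agent q))}

lemma redVal_self (x : Agent q) : redVal q G x x = 0 := by
  cases x with
  | a i s => simp [redVal]
  | b i => simp [redVal]
  | p r t => simp [redVal, sub_self]

lemma redVal_nonneg (x y : Agent q) : 0 ≤ redVal q G x y := by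
  cases x <;> cases y <;> simp only [redVal] <;> first | (split_ifs <;> norm_num) | norm_num

lemma redVal_le_one (x y : Agent q) : redVal q G x y ≤ 1 := by
  cases x <;> cases y <;> simp only [redVal] <;> first | (split_ifs <;> norm_num) | norm_num

def agentEquiv (q : ℕ) : Agent q ≃ (Fin (3*q) × Fin 2) ⊕ (Fin (3*q)) ⊕ (Fin (6*q) × Fin 5) where
  toFun := fun x => match x with
    | .a i s => .inl (i, s)
    | .b i => .inr (.inl i)
    | .p r t => .inr (.inr (r, t))
  invFun := fun x => match x with
    | .inl (i,s) => .a i s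
    | .inr (.inl i) => .b i
    | .inr (.inr (r,t)) => .p r t
  left_inv := by rintro (x|x|x) <;> rfl
  right_inv := by rintro (⟨i,s⟩|i|⟨r,t⟩) <;> rfl

lemma card_agent (q : ℕ) : Fintype.card (Agent q) = 39 * q := by
  rw [Fintype.card_congr (agentEquiv q)]
  simp
  ring

end AuxRed
section AuxRed2
open Finset
variable {q : ℕ} {G : SimpleGraph (Fin (3 * q))} [DecidableRel G.Adj]
variable {M : Finset (Finset (Agent q))}

lemma exists_mem_triple (hM : IsMatching univ M) (hcard : M.card = 13 * q) (x : Agent q) :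
    ∃ T ∈ M, x ∈ T := by
  have hU : M.biUnion id = univ := by
    apply Finset.eq_univ_of_card
    rw [show (M.biUnion id) = M.biUnion (fun T => T) from rfl,
      Finset.card_biUnion (fun T hT S hS hne => hM.2 T hT S hS hne)]
    have h3 : ∀ T ∈ M, T.card = 3 := fun T hT => (hM.1 T hT).1
    rw [Finset.sum_congr rfl h3, Finset.sum_const, hcard, card_agent]
    simp; ring
  have : x ∈ M.biUnion id := hU ▸ mem_univ x
  simpa using this

lemma triple_eq_triple (hM : IsMatching univ M) {T S : Finset (Agent q)} (hT : T ∈ M)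
    (hS : S ∈ M) {x : Agent q} (hxT : x ∈ T) (hxS : x ∈ S) : T = S := by
  by_contra h
  exact Finset.disjoint_left.mp (hM.2 T hT S hS h) hxT hxS

lemma utility_eq_sum (hM : IsMatching univ M) {T : Finset (Agent q)} (hT : T ∈ M)
    {x : Agent q} (hx : x ∈ T) :
    utility (redVal q G) M x = ∑ b ∈ T, redVal q G x b := by
  have hfilter : M.filter (fun t => x ∈ t) = {T} := by
    ext S
    simp only [mem_filter, mem_singleton]
    constructor
    · rintro ⟨hS, hxS⟩; exact triple_eq_triple hM hS hT hxS hx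
    · rintro rfl; exact ⟨hT, hx⟩
  unfold utility
  rw [hfilter, Finset.sum_singleton, Finset.sum_erase _ (redVal_self x)]

lemma sum_triple_explicit {B : Type*} [AddCommMonoid B] (f : Agent q → B) {x c d : Agent q}
    (hxc : x ≠ c) (hxd : x ≠ d) (hcd : c ≠ d) :
    ∑ b ∈ ({x, c, d} : Finset (Agent q)), f b = f x + f c + f d := by
  rw [show ({x, c, d} : Finset (Agent q)) = insert x (insert c {d}) from rfl,
    Finset.sum_insert (by simp [hxc, hxd]), Finset.sum_insert (by simp [hcd]),
    Finset.sum_singleton, add_assoc]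

lemma utility_parts (hM : IsMatching univ M) (hcard : M.card = 13 * q) (x : Agent q) :
    ∃ T c d, T ∈ M ∧ T = {x, c, d} ∧ x ≠ c ∧ x ≠ d ∧ c ≠ d ∧
      utility (redVal q G) M x = redVal q G x c + redVal q G x d := by
  obtain ⟨T, hT, hx⟩ := exists_mem_triple hM hcard x
  obtain ⟨u, v, w, huv, huw, hvw, hTeq⟩ := Finset.card_eq_three.mp (hM.1 T hT).1
  subst hTeq
  have hform : ∃ c d, x ≠ c ∧ x ≠ d ∧ c ≠ d ∧ ({u, v, w} : Finset (Agent q)) = {x, c, d} := by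
    simp only [mem_insert, mem_singleton] at hx
    rcases hx with rfl | rfl | rfl
    · exact ⟨v, w, huv, huw, hvw, rfl⟩
    · exact ⟨u, w, huv.symm, hvw, huw, by ext y; simp; tauto⟩
    · exact ⟨u, v, huw.symm, hvw.symm, huv, by ext y; simp; tauto⟩
  obtain ⟨c, d, h1, h2, h3, heq⟩ := hform
  refine ⟨_, c, d, hT, heq, h1, h2, h3, ?_⟩
  rw [utility_eq_sum hM hT hx, heq, sum_triple_explicit _ h1 h2 h3, redVal_self]
  ring

lemma no_block (hst : IsStable univ (redVal q G) M) {x y z : Agent q}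
    (hxy : x ≠ y) (hxz : x ≠ z) (hyz : y ≠ z)
    (hx : utility (redVal q G) M x < redVal q G x y + redVal q G x z)
    (hy : utility (redVal q G) M y < redVal q G y x + redVal q G y z)
    (hz : utility (redVal q G) M z < redVal q G z x + redVal q G z y) : False :=
  hst x y z ⟨mem_univ x, mem_univ y, mem_univ z, hxy, hxz, hyz, hx, hy, hz⟩

lemma pval (r : Fin (6*q)) (t t' : Fin 5) :
    redVal q G (Agent.p r t) (Agent.p r t') =
      if (t' - t = 1 ∨ t' - t = 2 ∨ t' - t = 4) then 1 else 0 := by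
  simp [redVal]

lemma pval_mem {r : Fin (6*q)} {t : Fin 5} {y : Agent q}
    (h : 0 < redVal q G (Agent.p r t) y) :
    ∃ t', y = Agent.p r t' ∧ (t' - t = 1 ∨ t' - t = 2 ∨ t' - t = 4) := by
  cases y with
  | a i s => simp [redVal] at h
  | b i => simp [redVal] at h
  | p r' t' =>
    simp only [redVal] at h
    split_ifs at h with hc
    · exact ⟨t', by rw [hc.1], hc.2⟩
    · norm_num at h

lemma aval_mem {i : Fin (3*q)} {s : Fin 2} {y : Agent q}
    (h : 0 < redVal q G (Agent.a i s) y) :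
    (∃ s', s' ≠ s ∧ y = Agent.a i s') ∨ y = Agent.b i := by
  cases y with
  | a j s' =>
    simp only [redVal] at h
    split_ifs at h with hc
    · exact Or.inl ⟨s', fun hss => hc.2 hss.symm, by rw [hc.1]⟩
    · norm_num at h
  | b j =>
    simp only [redVal] at h
    split_ifs at h with hc
    · exact Or.inr (by rw [hc])
    · norm_num at h
  | p r t => simp [redVal] at h

lemma bval_mem {i : Fin (3*q)} {y : Agent q}
    (h : 0 < redVal q G (Agent.b i) y) :
    (∃ s, y = Agent.a i s) ∨ (∃ j, G.Adj i j ∧ y = Agent.b j) := by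
  cases y with
  | a j s' =>
    simp only [redVal] at h
    split_ifs at h with hc
    · exact Or.inl ⟨s', by rw [hc]⟩
    · norm_num at h
  | b j =>
    simp only [redVal] at h
    split_ifs at h with hc
    · exact Or.inr ⟨j, hc, rfl⟩
    · norm_num at h
  | p r t => simp [redVal] at h

end AuxRed2
section AuxRed3
open Finset
variable {q : ℕ} {G : SimpleGraph (Fin (3 * q))} [DecidableRel G.Adj]
variable {M : Finset (Finset (Agent q))}

lemma exists_internal (hM : IsMatching univ M) (hst : IsStable univ (redVal q G) M)
    (hcard : M.card = 13 * q) (r : Fin (6*q)) :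
    ∃ T ∈ M, T ⊆ (univ.image (Agent.p r) : Finset (Agent q)) := by
  by_contra hno
  push_neg at hno
  set P : Finset (Agent q) := univ.image (Agent.p r) with hP
  have hPmem : ∀ x : Agent q, x ∈ P ↔ ∃ t, x = Agent.p r t := by
    intro x; simp [hP, eq_comm]
  have hu1 : ∀ t : Fin 5, utility (redVal q G) M (Agent.p r t) ≤ 1 := by
    intro t
    obtain ⟨T, c, d, hT, hTeq, hxc, hxd, hcd, hu⟩ := utility_parts (G := G) hM hcard (Agent.p r t)
    by_contra hgt
    push_neg at hgt
    have hc : 0 < redVal q G (Agent.p r t) c := by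
      have := redVal_le_one (G := G) (Agent.p r t) d; linarith
    have hd : 0 < redVal q G (Agent.p r t) d := by
      have := redVal_le_one (G := G) (Agent.p r t) c; linarith
    obtain ⟨tc, rfl, _⟩ := pval_mem hc
    obtain ⟨td, rfl, _⟩ := pval_mem hd
    refine hno T hT ?_
    rw [hTeq]
    intro z hz
    simp only [mem_insert, mem_singleton] at hz
    rcases hz with rfl | rfl | rfl <;> · rw [hPmem]; exact ⟨_, rfl⟩
  have hu0 : ∀ t : Fin 5, 1 ≤ utility (redVal q G) M (Agent.p r t) := by
    intro t
    by_contra h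
    push_neg at h
    refine no_block hst (x := Agent.p r (t+3)) (y := Agent.p r (t+4)) (z := Agent.p r t)
      ?_ ?_ ?_ ?_ ?_ ?_
    · simp only [ne_eq, Agent.p.injEq, not_and]
      intro _; exact (by decide : ∀ t : Fin 5, t+3 ≠ t+4) t
    · simp only [ne_eq, Agent.p.injEq, not_and]
      intro _; exact (by decide : ∀ t : Fin 5, t+3 ≠ t) t
    · simp only [ne_eq, Agent.p.injEq, not_and]
      intro _; exact (by decide : ∀ t : Fin 5, t+4 ≠ t) t
    · rw [pval, pval, (by decide : ∀ t : Fin 5, (t+4) - (t+3) = 1) t,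
        (by decide : ∀ t : Fin 5, t - (t+3) = 2) t, if_pos (by decide), if_pos (by decide)]
      have := hu1 (t+3); linarith
    · rw [pval, pval, (by decide : ∀ t : Fin 5, (t+3) - (t+4) = 4) t,
        (by decide : ∀ t : Fin 5, t - (t+4) = 1) t, if_pos (by decide), if_pos (by decide)]
      have := hu1 (t+4); linarith
    · rw [pval, pval, (by decide : ∀ t : Fin 5, (t+3) - t = 3) t,
        (by decide : ∀ t : Fin 5, (t+4) - t = 4) t, if_neg (by decide), if_pos (by decide)]
      linarith
  have hmeet : ∀ T ∈ M, (T ∩ P).card = 0 ∨ (T ∩ P).card = 2 := by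
    intro T hT
    rcases Nat.eq_zero_or_pos (T ∩ P).card with h0 | hpos
    · exact Or.inl h0
    right
    obtain ⟨x, hx⟩ := Finset.card_pos.mp hpos
    obtain ⟨hxT, hxP⟩ := Finset.mem_inter.mp hx
    obtain ⟨t, rfl⟩ := (hPmem x).mp hxP
    have h1 := hu0 t
    rw [utility_eq_sum hM hT hxT] at h1
    have hex : ∃ b ∈ T, 0 < redVal q G (Agent.p r t) b := by
      by_contra hcon
      push_neg at hcon
      have := Finset.sum_nonpos hcon
      linarith
    obtain ⟨c, hcT, hc⟩ := hex
    obtain ⟨t', rfl, hoff⟩ := pval_mem hc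
    have hne : Agent.p r t ≠ Agent.p r t' := by
      simp only [ne_eq, Agent.p.injEq, not_and]
      intro _ htt
      subst htt
      revert hoff
      exact (by decide : ∀ t : Fin 5, ¬(t - t = 1 ∨ t - t = 2 ∨ t - t = 4)) t
    have hsub2 : ({Agent.p r t, Agent.p r t'} : Finset (Agent q)) ⊆ T ∩ P := by
      intro z hz
      simp only [mem_insert, mem_singleton] at hz
      rcases hz with rfl | rfl <;> rw [mem_inter, hPmem] <;> exact ⟨by assumption, _, rfl⟩
    have h2 : 2 ≤ (T ∩ P).card := by
      calc 2 = ({Agent.p r t, Agent.p r t'} : Finset (Agent q)).card := by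
              rw [Finset.card_insert_of_notMem (by simpa using hne), Finset.card_singleton]
        _ ≤ _ := Finset.card_le_card hsub2
    have h3 : (T ∩ P).card ≤ 3 := by
      have := Finset.card_le_card ((Finset.inter_subset_left : T ∩ P ⊆ T))
      rw [(hM.1 T hT).1] at this
      exact this
    have hne3 : (T ∩ P).card ≠ 3 := by
      intro hc3
      have hTP : T ∩ P = T := Finset.eq_of_subset_of_card_le Finset.inter_subset_left
        (by rw [hc3, (hM.1 T hT).1])
      exact hno T hT (by rw [← hTP]; exact Finset.inter_subset_right)
    omega
  have hPcover : P = M.biUnion (fun T => T ∩ P) := by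
    ext x
    simp only [mem_biUnion, mem_inter]
    constructor
    · intro hx
      obtain ⟨T, hT, hxT⟩ := exists_mem_triple hM hcard x
      exact ⟨T, hT, hxT, hx⟩
    · rintro ⟨T, _, _, hx⟩; exact hx
  have hcardP : P.card = 5 := by
    rw [hP, Finset.card_image_of_injective _ (fun a b hab => by simpa using hab)]
    simp
  have hsum : P.card = ∑ T ∈ M, (T ∩ P).card := by
    conv_lhs => rw [hPcover]
    exact Finset.card_biUnion (fun T hT S hS hne =>
      Finset.disjoint_of_subset_left Finset.inter_subset_left
        (Finset.disjoint_of_subset_right Finset.inter_subset_left (hM.2 T hT S hS hne)))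
  have heven : Even (∑ T ∈ M, (T ∩ P).card) := by
    apply Finset.even_sum
    intro T hT
    rcases hmeet T hT with h | h <;> rw [h] <;> decide
  rw [← hsum, hcardP] at heven
  exact (by decide : ¬ Even 5) heven

end AuxRed3
section AuxRed4
open Finset
variable {q : ℕ} {G : SimpleGraph (Fin (3 * q))} [DecidableRel G.Adj]
variable {M : Finset (Finset (Agent q))}

lemma pne (r : Fin (6*q)) {t t' : Fin 5} (h : t ≠ t') :
    (Agent.p r t : Agent q) ≠ Agent.p r t' := by
  intro hh
  injection hh with h1 h2
  exact h h2

lemma pentagon_structure (hM : IsMatching univ M) (hst : IsStable univ (redVal q G) M)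
    (hcard : M.card = 13 * q) (r : Fin (6*q)) :
    ∃ s : Fin 5, ({Agent.p r s, Agent.p r (s+1), Agent.p r (s+2)} : Finset (Agent q)) ∈ M ∧
      ∃ T ∈ M, Agent.p r (s+3) ∈ T ∧ Agent.p r (s+4) ∈ T := by
  obtain ⟨T₀, hT₀, hsubP⟩ := exists_internal hM hst hcard r
  obtain ⟨x, y, z, hxy, hxz, hyz, hTeq⟩ := Finset.card_eq_three.mp (hM.1 T₀ hT₀).1
  obtain ⟨t1, rfl⟩ : ∃ t, Agent.p r t = x := by
    have := hsubP (show x ∈ T₀ by rw [hTeq]; simp)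
    simpa using this
  obtain ⟨t2, rfl⟩ : ∃ t, Agent.p r t = y := by
    have := hsubP (show y ∈ T₀ by rw [hTeq]; simp)
    simpa using this
  obtain ⟨t3, rfl⟩ : ∃ t, Agent.p r t = z := by
    have := hsubP (show z ∈ T₀ by rw [hTeq]; simp)
    simpa using this
  have ht12 : t1 ≠ t2 := fun h => hxy (by rw [h])
  have ht13 : t1 ≠ t3 := fun h => hxz (by rw [h])
  have ht23 : t2 ≠ t3 := fun h => hyz (by rw [h])
  have hclass := (by decide : ∀ a b c : Fin 5, a ≠ b → a ≠ c → b ≠ c →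
      (∃ s : Fin 5, ({a, b, c} : Finset (Fin 5)) = {s, s+1, s+2}) ∨
      (∃ s : Fin 5, ({a, b, c} : Finset (Fin 5)) = {s, s+1, s+3})) t1 t2 t3 ht12 ht13 ht23
  have himg : T₀ = Finset.image (Agent.p r) {t1, t2, t3} := by
    rw [hTeq]
    simp [Finset.image_insert]
  rcases hclass with ⟨s, hset⟩ | ⟨s, hset⟩
  · -- consecutive case
    have hT0eq : T₀ = {Agent.p r s, Agent.p r (s+1), Agent.p r (s+2)} := by
      rw [himg, hset]
      simp [Finset.image_insert]
    clear himg hset hTeq hsubP hxy hxz hyz ht12 ht13 ht23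
    have hmem0 : Agent.p r s ∈ T₀ := by rw [hT0eq]; simp
    have hmem1 : Agent.p r (s+1) ∈ T₀ := by rw [hT0eq]; simp
    have hmem2 : Agent.p r (s+2) ∈ T₀ := by rw [hT0eq]; simp
    have hu2 : utility (redVal q G) M (Agent.p r (s+2)) = 1 := by
      rw [utility_eq_sum hM hT₀ hmem2, hT0eq,
        sum_triple_explicit _ (pne r ((by decide : ∀ u : Fin 5, u ≠ u+1) s))
          (pne r ((by decide : ∀ u : Fin 5, u ≠ u+2) s))
          (pne r ((by decide : ∀ u : Fin 5, u+1 ≠ u+2) s)),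
        pval, pval, pval,
        (by decide : ∀ u : Fin 5, u - (u+2) = 3) s,
        (by decide : ∀ u : Fin 5, (u+1) - (u+2) = 4) s,
        (by decide : ∀ u : Fin 5, (u+2) - (u+2) = 0) s,
        if_neg (by decide), if_pos (by decide), if_neg (by decide)]
      norm_num
    have hn3 : Agent.p r (s+3) ∉ T₀ := by
      intro hmem
      rw [hT0eq] at hmem
      simp only [mem_insert, mem_singleton, Agent.p.injEq, true_and] at hmem
      exact (by decide : ∀ u : Fin 5, ¬(u+3 = u ∨ u+3 = u+1 ∨ u+3 = u+2)) s hmem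
    have hn4 : Agent.p r (s+4) ∉ T₀ := by
      intro hmem
      rw [hT0eq] at hmem
      simp only [mem_insert, mem_singleton, Agent.p.injEq, true_and] at hmem
      exact (by decide : ∀ u : Fin 5, ¬(u+4 = u ∨ u+4 = u+1 ∨ u+4 = u+2)) s hmem
    have hu3le : utility (redVal q G) M (Agent.p r (s+3)) ≤ 1 := by
      obtain ⟨T3, c, d, hT3, hT3eq, h1, h2, h3, hu⟩ :=
        utility_parts (G := G) hM hcard (Agent.p r (s+3))
      by_contra hgt
      push_neg at hgt
      have hT3ne : T₀ ≠ T3 :=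
        fun h => hn3 (by rw [h, hT3eq]; simp)
      have hc : 0 < redVal q G (Agent.p r (s+3)) c := by
        have := redVal_le_one (G := G) (Agent.p r (s+3)) d; linarith
      have hd : 0 < redVal q G (Agent.p r (s+3)) d := by
        have := redVal_le_one (G := G) (Agent.p r (s+3)) c; linarith
      obtain ⟨tc, rfl, hoffc⟩ := pval_mem hc
      obtain ⟨td, rfl, hoffd⟩ := pval_mem hd
      have hcT3 : Agent.p r tc ∈ T3 := by rw [hT3eq]; simp
      have hdT3 : Agent.p r td ∈ T3 := by rw [hT3eq]; simp
      have htc : tc = s+4 := by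
        rcases (by decide : ∀ u v : Fin 5, (u - (v+3) = 1 ∨ u - (v+3) = 2 ∨ u - (v+3) = 4) →
            (u = v+4 ∨ u = v ∨ u = v+2)) tc s hoffc with h | h | h
        · exact h
        · subst h; exact absurd (triple_eq_triple hM hT₀ hT3 hmem0 hcT3) hT3ne
        · subst h; exact absurd (triple_eq_triple hM hT₀ hT3 hmem2 hcT3) hT3ne
      have htd : td = s+4 := by
        rcases (by decide : ∀ u v : Fin 5, (u - (v+3) = 1 ∨ u - (v+3) = 2 ∨ u - (v+3) = 4) →
            (u = v+4 ∨ u = v ∨ u = v+2)) td s hoffd with h | h | h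
        · exact h
        · subst h; exact absurd (triple_eq_triple hM hT₀ hT3 hmem0 hdT3) hT3ne
        · subst h; exact absurd (triple_eq_triple hM hT₀ hT3 hmem2 hdT3) hT3ne
      exact h3 (by rw [htc, htd])
    obtain ⟨T4, c4, d4, hT4, hT4eq, g1, g2, g3, hu4⟩ :=
      utility_parts (G := G) hM hcard (Agent.p r (s+4))
    have hmem44 : Agent.p r (s+4) ∈ T4 := by rw [hT4eq]; simp
    have hT4ne : T₀ ≠ T4 := fun h => hn4 (h ▸ hmem44)
    by_cases hmate : Agent.p r (s+3) ∈ T4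
    · exact ⟨s, hT0eq ▸ hT₀, T4, hT4, hmate, hmem44⟩
    · exfalso
      have hc4 : redVal q G (Agent.p r (s+4)) c4 ≤ 0 := by
        by_contra hpos
        push_neg at hpos
        obtain ⟨tc, rfl, hoff⟩ := pval_mem hpos
        have hcT4 : Agent.p r tc ∈ T4 := by rw [hT4eq]; simp
        rcases (by decide : ∀ u v : Fin 5, (u - (v+4) = 1 ∨ u - (v+4) = 2 ∨ u - (v+4) = 4) →
            (u = v ∨ u = v+1 ∨ u = v+3)) tc s hoff with h | h | h
        · subst h; exact hT4ne (triple_eq_triple hM hT₀ hT4 hmem0 hcT4)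
        · subst h; exact hT4ne (triple_eq_triple hM hT₀ hT4 hmem1 hcT4)
        · subst h; exact hmate hcT4
      have hd4 : redVal q G (Agent.p r (s+4)) d4 ≤ 0 := by
        by_contra hpos
        push_neg at hpos
        obtain ⟨td, rfl, hoff⟩ := pval_mem hpos
        have hdT4 : Agent.p r td ∈ T4 := by rw [hT4eq]; simp
        rcases (by decide : ∀ u v : Fin 5, (u - (v+4) = 1 ∨ u - (v+4) = 2 ∨ u - (v+4) = 4) →
            (u = v ∨ u = v+1 ∨ u = v+3)) td s hoff with h | h | h
        · subst h; exact hT4ne (triple_eq_triple hM hT₀ hT4 hmem0 hdT4)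
        · subst h; exact hT4ne (triple_eq_triple hM hT₀ hT4 hmem1 hdT4)
        · subst h; exact hmate hdT4
      have hu4le : utility (redVal q G) M (Agent.p r (s+4)) ≤ 0 := by
        rw [hu4]; linarith
      refine no_block hst (x := Agent.p r (s+2)) (y := Agent.p r (s+3)) (z := Agent.p r (s+4))
        (pne r ((by decide : ∀ u : Fin 5, u+2 ≠ u+3) s))
        (pne r ((by decide : ∀ u : Fin 5, u+2 ≠ u+4) s))
        (pne r ((by decide : ∀ u : Fin 5, u+3 ≠ u+4) s)) ?_ ?_ ?_
      · rw [pval, pval, (by decide : ∀ u : Fin 5, (u+3) - (u+2) = 1) s,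
          (by decide : ∀ u : Fin 5, (u+4) - (u+2) = 2) s,
          if_pos (by decide), if_pos (by decide), hu2]
        norm_num
      · rw [pval, pval, (by decide : ∀ u : Fin 5, (u+2) - (u+3) = 4) s,
          (by decide : ∀ u : Fin 5, (u+4) - (u+3) = 1) s,
          if_pos (by decide), if_pos (by decide)]
        linarith
      · rw [pval, pval, (by decide : ∀ u : Fin 5, (u+2) - (u+4) = 3) s,
          (by decide : ∀ u : Fin 5, (u+3) - (u+4) = 4) s,
          if_neg (by decide), if_pos (by decide)]
        linarith
  · -- non-consecutive case : derive a contradiction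
    exfalso
    have hT0eq : T₀ = {Agent.p r s, Agent.p r (s+1), Agent.p r (s+3)} := by
      rw [himg, hset]
      simp [Finset.image_insert]
    clear himg hset hTeq hsubP hxy hxz hyz ht12 ht13 ht23
    have hmem0 : Agent.p r s ∈ T₀ := by rw [hT0eq]; simp
    have hmem1 : Agent.p r (s+1) ∈ T₀ := by rw [hT0eq]; simp
    have hmem3 : Agent.p r (s+3) ∈ T₀ := by rw [hT0eq]; simp
    have hn2 : Agent.p r (s+2) ∉ T₀ := by
      intro hmem
      rw [hT0eq] at hmem
      simp only [mem_insert, mem_singleton, Agent.p.injEq, true_and] at hmem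
      exact (by decide : ∀ u : Fin 5, ¬(u+2 = u ∨ u+2 = u+1 ∨ u+2 = u+3)) s hmem
    have hn4 : Agent.p r (s+4) ∉ T₀ := by
      intro hmem
      rw [hT0eq] at hmem
      simp only [mem_insert, mem_singleton, Agent.p.injEq, true_and] at hmem
      exact (by decide : ∀ u : Fin 5, ¬(u+4 = u ∨ u+4 = u+1 ∨ u+4 = u+3)) s hmem
    have hu3 : utility (redVal q G) M (Agent.p r (s+3)) = 1 := by
      rw [utility_eq_sum hM hT₀ hmem3, hT0eq,
        sum_triple_explicit _ (pne r ((by decide : ∀ u : Fin 5, u ≠ u+1) s))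
          (pne r ((by decide : ∀ u : Fin 5, u ≠ u+3) s))
          (pne r ((by decide : ∀ u : Fin 5, u+1 ≠ u+3) s)),
        pval, pval, pval,
        (by decide : ∀ u : Fin 5, u - (u+3) = 2) s,
        (by decide : ∀ u : Fin 5, (u+1) - (u+3) = 3) s,
        (by decide : ∀ u : Fin 5, (u+3) - (u+3) = 0) s,
        if_pos (by decide), if_neg (by decide), if_neg (by decide)]
      norm_num
    have hu2le : utility (redVal q G) M (Agent.p r (s+2)) ≤ 1 := by
      obtain ⟨T2, c, d, hT2, hT2eq, h1, h2, h3, hu⟩ :=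
        utility_parts (G := G) hM hcard (Agent.p r (s+2))
      by_contra hgt
      push_neg at hgt
      have hT2ne : T₀ ≠ T2 := fun h => hn2 (by rw [h, hT2eq]; simp)
      have hc : 0 < redVal q G (Agent.p r (s+2)) c := by
        have := redVal_le_one (G := G) (Agent.p r (s+2)) d; linarith
      have hd : 0 < redVal q G (Agent.p r (s+2)) d := by
        have := redVal_le_one (G := G) (Agent.p r (s+2)) c; linarith
      obtain ⟨tc, rfl, hoffc⟩ := pval_mem hc
      obtain ⟨td, rfl, hoffd⟩ := pval_mem hd
      have hcT2 : Agent.p r tc ∈ T2 := by rw [hT2eq]; simp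
      have hdT2 : Agent.p r td ∈ T2 := by rw [hT2eq]; simp
      have htc : tc = s+4 := by
        rcases (by decide : ∀ u v : Fin 5, (u - (v+2) = 1 ∨ u - (v+2) = 2 ∨ u - (v+2) = 4) →
            (u = v+3 ∨ u = v+4 ∨ u = v+1)) tc s hoffc with h | h | h
        · subst h; exact absurd (triple_eq_triple hM hT₀ hT2 hmem3 hcT2) hT2ne
        · exact h
        · subst h; exact absurd (triple_eq_triple hM hT₀ hT2 hmem1 hcT2) hT2ne
      have htd : td = s+4 := by
        rcases (by decide : ∀ u v : Fin 5, (u - (v+2) = 1 ∨ u - (v+2) = 2 ∨ u - (v+2) = 4) →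
            (u = v+3 ∨ u = v+4 ∨ u = v+1)) td s hoffd with h | h | h
        · subst h; exact absurd (triple_eq_triple hM hT₀ hT2 hmem3 hdT2) hT2ne
        · exact h
        · subst h; exact absurd (triple_eq_triple hM hT₀ hT2 hmem1 hdT2) hT2ne
      exact h3 (by rw [htc, htd])
    have hu4le : utility (redVal q G) M (Agent.p r (s+4)) ≤ 0 := by
      obtain ⟨T4, c, d, hT4, hT4eq, h1, h2, h3, hu⟩ :=
        utility_parts (G := G) hM hcard (Agent.p r (s+4))
      have hT4ne : T₀ ≠ T4 := fun h => hn4 (by rw [h, hT4eq]; simp)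
      have hc : redVal q G (Agent.p r (s+4)) c ≤ 0 := by
        by_contra hpos
        push_neg at hpos
        obtain ⟨tc, rfl, hoff⟩ := pval_mem hpos
        have hcT4 : Agent.p r tc ∈ T4 := by rw [hT4eq]; simp
        rcases (by decide : ∀ u v : Fin 5, (u - (v+4) = 1 ∨ u - (v+4) = 2 ∨ u - (v+4) = 4) →
            (u = v ∨ u = v+1 ∨ u = v+3)) tc s hoff with h | h | h
        · subst h; exact hT4ne (triple_eq_triple hM hT₀ hT4 hmem0 hcT4)
        · subst h; exact hT4ne (triple_eq_triple hM hT₀ hT4 hmem1 hcT4)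
        · subst h; exact hT4ne (triple_eq_triple hM hT₀ hT4 hmem3 hcT4)
      have hd : redVal q G (Agent.p r (s+4)) d ≤ 0 := by
        by_contra hpos
        push_neg at hpos
        obtain ⟨td, rfl, hoff⟩ := pval_mem hpos
        have hdT4 : Agent.p r td ∈ T4 := by rw [hT4eq]; simp
        rcases (by decide : ∀ u v : Fin 5, (u - (v+4) = 1 ∨ u - (v+4) = 2 ∨ u - (v+4) = 4) →
            (u = v ∨ u = v+1 ∨ u = v+3)) td s hoff with h | h | h
        · subst h; exact hT4ne (triple_eq_triple hM hT₀ hT4 hmem0 hdT4)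
        · subst h; exact hT4ne (triple_eq_triple hM hT₀ hT4 hmem1 hdT4)
        · subst h; exact hT4ne (triple_eq_triple hM hT₀ hT4 hmem3 hdT4)
      rw [hu]; linarith
    refine no_block hst (x := Agent.p r (s+2)) (y := Agent.p r (s+3)) (z := Agent.p r (s+4))
      (pne r ((by decide : ∀ u : Fin 5, u+2 ≠ u+3) s))
      (pne r ((by decide : ∀ u : Fin 5, u+2 ≠ u+4) s))
      (pne r ((by decide : ∀ u : Fin 5, u+3 ≠ u+4) s)) ?_ ?_ ?_
    · rw [pval, pval, (by decide : ∀ u : Fin 5, (u+3) - (u+2) = 1) s,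
        (by decide : ∀ u : Fin 5, (u+4) - (u+2) = 2) s,
        if_pos (by decide), if_pos (by decide)]
      linarith
    · rw [pval, pval, (by decide : ∀ u : Fin 5, (u+2) - (u+3) = 4) s,
        (by decide : ∀ u : Fin 5, (u+4) - (u+3) = 1) s,
        if_pos (by decide), if_pos (by decide), hu3]
      norm_num
    · rw [pval, pval, (by decide : ∀ u : Fin 5, (u+2) - (u+4) = 3) s,
        (by decide : ∀ u : Fin 5, (u+3) - (u+4) = 4) s,
        if_neg (by decide), if_pos (by decide)]
      linarith

end AuxRed4
section AuxRed5
open Finset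
variable {q : ℕ} {G : SimpleGraph (Fin (3 * q))} [DecidableRel G.Adj]
variable {M : Finset (Finset (Agent q))}

lemma third_elt {A' : Type*} [DecidableEq A'] {T : Finset A'} {x y : A'}
    (h3 : T.card = 3) (hx : x ∈ T) (hy : y ∈ T) (hxy : x ≠ y) :
    ∃ z, z ≠ x ∧ z ≠ y ∧ T = {x, y, z} := by
  have hsub : ({x, y} : Finset A') ⊆ T := by
    intro a ha
    simp only [mem_insert, mem_singleton] at ha
    rcases ha with rfl | rfl <;> assumption
  have hc2 : ({x, y} : Finset A').card = 2 := by
    rw [Finset.card_insert_of_notMem (by simpa using hxy), Finset.card_singleton]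
  have hcd : (T \ {x, y}).card = 1 := by
    rw [Finset.card_sdiff_of_subset hsub, h3, hc2]
  obtain ⟨z, hz⟩ := Finset.card_eq_one.mp hcd
  have hzmem : z ∈ T \ ({x, y} : Finset A') := by rw [hz]; simp
  rw [Finset.mem_sdiff, mem_insert, mem_singleton] at hzmem
  refine ⟨z, fun h => hzmem.2 (Or.inl h), fun h => hzmem.2 (Or.inr h), ?_⟩
  have hu := Finset.union_sdiff_of_subset hsub
  rw [hz] at hu
  rw [← hu]
  ext a
  simp only [mem_union, mem_insert, mem_singleton]
  tauto

lemma pentagon_final (hM : IsMatching univ M) (hst : IsStable univ (redVal q G) M)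
    (hcard : M.card = 13 * q) (r : Fin (6*q)) :
    ∃ (T : Finset (Agent q)) (u v : Fin 5) (y : Agent q), T ∈ M ∧
      T = {Agent.p r u, Agent.p r v, y} ∧ Agent.p r u ≠ Agent.p r v ∧
      y ≠ Agent.p r u ∧ y ≠ Agent.p r v ∧
      (∀ r' t', y ≠ Agent.p r' t') := by
  obtain ⟨s, hT0, T, hT, h3T, h4T⟩ := pentagon_structure hM hst hcard r
  have hne34 : (Agent.p r (s+3) : Agent q) ≠ Agent.p r (s+4) :=
    pne r ((by decide : ∀ u : Fin 5, u+3 ≠ u+4) s)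
  obtain ⟨y, hy3, hy4, hTeq⟩ := third_elt (hM.1 T hT).1 h3T h4T hne34
  refine ⟨T, s+3, s+4, y, hT, hTeq, hne34, hy3, hy4, ?_⟩
  intro r' t' heq
  subst heq
  by_cases hrr : r' = r
  · subst hrr
    -- t' must avoid all five values
    have hyT : Agent.p r' t' ∈ T := by rw [hTeq]; simp
    have hTne : T ≠ ({Agent.p r' s, Agent.p r' (s+1), Agent.p r' (s+2)} : Finset (Agent q)) := by
      intro h
      have : Agent.p r' (s+3) ∈ ({Agent.p r' s, Agent.p r' (s+1), Agent.p r' (s+2)} : Finset (Agent q)) := by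
        rw [← h]; exact h3T
      simp only [mem_insert, mem_singleton, Agent.p.injEq, true_and] at this
      exact (by decide : ∀ u : Fin 5, ¬(u+3 = u ∨ u+3 = u+1 ∨ u+3 = u+2)) s this
    have hdisj := hM.2 T hT _ hT0 hTne
    have hnmem : Agent.p r' t' ∉ ({Agent.p r' s, Agent.p r' (s+1), Agent.p r' (s+2)} : Finset (Agent q)) :=
      Finset.disjoint_left.mp hdisj hyT
    simp only [mem_insert, mem_singleton, Agent.p.injEq, true_and, not_or] at hnmem
    have h3' : t' ≠ s+3 := fun h => hy3 (by rw [h])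
    have h4' : t' ≠ s+4 := fun h => hy4 (by rw [h])
    rcases (by decide : ∀ a b : Fin 5, a = b ∨ a = b+1 ∨ a = b+2 ∨ a = b+3 ∨ a = b+4) t' s with
      h | h | h | h | h
    · exact hnmem.1 h
    · exact hnmem.2.1 h
    · exact hnmem.2.2 h
    · exact h3' h
    · exact h4' h
  · -- r' ≠ r : use the structure of pentagon r'
    obtain ⟨s', hT0', T', hT', h3T', h4T'⟩ := pentagon_structure hM hst hcard r'
    have hyT : Agent.p r' t' ∈ T := by rw [hTeq]; simp
    rcases (by decide : ∀ a b : Fin 5, a = b ∨ a = b+1 ∨ a = b+2 ∨ a = b+3 ∨ a = b+4) t' s' with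
      h | h | h | h | h
    -- first three cases: y lies in the internal triple of r'
    · have : T = ({Agent.p r' s', Agent.p r' (s'+1), Agent.p r' (s'+2)} : Finset (Agent q)) :=
        triple_eq_triple hM hT hT0' hyT (by rw [h]; simp)
      have h3in : Agent.p r (s+3) ∈ ({Agent.p r' s', Agent.p r' (s'+1), Agent.p r' (s'+2)} : Finset (Agent q)) := by
        rw [← this]; exact h3T
      simp only [mem_insert, mem_singleton, Agent.p.injEq] at h3in
      rcases h3in with ⟨h, _⟩ | ⟨h, _⟩ | ⟨h, _⟩ <;> exact hrr h.symm
    · have : T = ({Agent.p r' s', Agent.p r' (s'+1), Agent.p r' (s'+2)} : Finset (Agent q)) :=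
        triple_eq_triple hM hT hT0' hyT (by rw [h]; simp)
      have h3in : Agent.p r (s+3) ∈ ({Agent.p r' s', Agent.p r' (s'+1), Agent.p r' (s'+2)} : Finset (Agent q)) := by
        rw [← this]; exact h3T
      simp only [mem_insert, mem_singleton, Agent.p.injEq] at h3in
      rcases h3in with ⟨h, _⟩ | ⟨h, _⟩ | ⟨h, _⟩ <;> exact hrr h.symm
    · have : T = ({Agent.p r' s', Agent.p r' (s'+1), Agent.p r' (s'+2)} : Finset (Agent q)) :=
        triple_eq_triple hM hT hT0' hyT (by rw [h]; simp)
      have h3in : Agent.p r (s+3) ∈ ({Agent.p r' s', Agent.p r' (s'+1), Agent.p r' (s'+2)} : Finset (Agent q)) := by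
        rw [← this]; exact h3T
      simp only [mem_insert, mem_singleton, Agent.p.injEq] at h3in
      rcases h3in with ⟨h, _⟩ | ⟨h, _⟩ | ⟨h, _⟩ <;> exact hrr h.symm
    -- last two cases: y lies in the mate triple T' of r', forcing both mates = y
    · have hTT' : T = T' := triple_eq_triple hM hT hT' hyT (by rw [h]; exact h3T')
      -- p r' (s'+4) ∈ T = {p r (s+3), p r (s+4), p r' (s'+3)}
      have h4in : Agent.p r' (s'+4) ∈ T := by rw [hTT']; exact h4T'
      rw [hTeq] at h4in
      simp only [mem_insert, mem_singleton, Agent.p.injEq] at h4in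
      rcases h4in with ⟨hh, _⟩ | ⟨hh, _⟩ | ⟨_, hh⟩
      · exact hrr hh
      · exact hrr hh
      · rw [h] at hh
        exact (by decide : ∀ u : Fin 5, ¬(u+4 = u+3)) s' hh
    · have hTT' : T = T' := triple_eq_triple hM hT hT' hyT (by rw [h]; exact h4T')
      have h3in : Agent.p r' (s'+3) ∈ T := by rw [hTT']; exact h3T'
      rw [hTeq] at h3in
      simp only [mem_insert, mem_singleton, Agent.p.injEq] at h3in
      rcases h3in with ⟨hh, _⟩ | ⟨hh, _⟩ | ⟨_, hh⟩
      · exact hrr hh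
      · exact hrr hh
      · rw [h] at hh
        exact (by decide : ∀ u : Fin 5, ¬(u+3 = u+4)) s' hh

end AuxRed5
section AuxRed6
open Finset
variable {q : ℕ} {G : SimpleGraph (Fin (3 * q))} [DecidableRel G.Adj]
variable {M : Finset (Finset (Agent q))}

lemma a_util_le (hM : IsMatching univ M) (hcard : M.card = 13 * q) (i : Fin (3*q)) (s2 : Fin 2)
    (hTne : ({Agent.a i 0, Agent.a i 1, Agent.b i} : Finset (Agent q)) ∉ M) :
    utility (redVal q G) M (Agent.a i s2) ≤ 1 := by
  obtain ⟨Ta, c, d, hTa, hTaeq, h1, h2, h3, hu⟩ := utility_parts (G := G) hM hcard (Agent.a i s2)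
  by_contra hgt
  push_neg at hgt
  have hc : 0 < redVal q G (Agent.a i s2) c := by
    have := redVal_le_one (G := G) (Agent.a i s2) d; linarith
  have hd : 0 < redVal q G (Agent.a i s2) d := by
    have := redVal_le_one (G := G) (Agent.a i s2) c; linarith
  rcases aval_mem hc with ⟨sc, hsc, rfl⟩ | rfl <;> rcases aval_mem hd with ⟨sd, hsd, rfl⟩ | rfl
  · exact h3 (by rw [(by decide : ∀ a b c : Fin 2, a ≠ c → b ≠ c → a = b) sc sd s2 hsc hsd])
  · apply hTne
    have heq : Ta = ({Agent.a i 0, Agent.a i 1, Agent.b i} : Finset (Agent q)) := by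
      rw [hTaeq]
      rcases (by decide : ∀ a b : Fin 2, b ≠ a → (a = 0 ∧ b = 1) ∨ (a = 1 ∧ b = 0)) s2 sc hsc with
        ⟨ha, hb⟩ | ⟨ha, hb⟩ <;> rw [ha, hb] <;> · ext w; simp; tauto
    rw [← heq]; exact hTa
  · apply hTne
    have heq : Ta = ({Agent.a i 0, Agent.a i 1, Agent.b i} : Finset (Agent q)) := by
      rw [hTaeq]
      rcases (by decide : ∀ a b : Fin 2, b ≠ a → (a = 0 ∧ b = 1) ∨ (a = 1 ∧ b = 0)) s2 sd hsd with
        ⟨ha, hb⟩ | ⟨ha, hb⟩ <;> rw [ha, hb] <;> · ext w; simp; tauto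
    rw [← heq]; exact hTa
  · exact h3 rfl

lemma b_util_ge (hM : IsMatching univ M) (hst : IsStable univ (redVal q G) M)
    (hcard : M.card = 13 * q) (i : Fin (3*q))
    (hTne : ({Agent.a i 0, Agent.a i 1, Agent.b i} : Finset (Agent q)) ∉ M) :
    2 ≤ utility (redVal q G) M (Agent.b i) := by
  by_contra h
  push_neg at h
  have e1 : redVal q G (Agent.a i 0) (Agent.a i 1) = 1 := by
    simp [redVal]
  have e1' : redVal q G (Agent.a i 1) (Agent.a i 0) = 1 := by
    simp [redVal]
  have e2 : redVal q G (Agent.a i 0) (Agent.b i) = 1 := by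
    simp [redVal]
  have e2' : redVal q G (Agent.a i 1) (Agent.b i) = 1 := by
    simp [redVal]
  have e3 : redVal q G (Agent.b i) (Agent.a i 0) = 1 := by
    simp [redVal]
  have e3' : redVal q G (Agent.b i) (Agent.a i 1) = 1 := by
    simp [redVal]
  refine no_block hst (x := Agent.a i 0) (y := Agent.a i 1) (z := Agent.b i)
    ?_ ?_ ?_ ?_ ?_ ?_
  · intro hh; injection hh with _ h2; exact (by decide : ¬((0:Fin 2) = 1)) h2
  · intro hh; cases hh
  · intro hh; cases hh
  · rw [e1, e2]
    have := a_util_le (G := G) hM hcard i 0 hTne; linarith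
  · rw [e1', e2']
    have := a_util_le (G := G) hM hcard i 1 hTne; linarith
  · rw [e3, e3']; linarith

end AuxRed6

/-- If the instance constructed by the reduction contains a stable matching of cardinality
`|N|/3 = 13q`, then `G` has a partition into triangles. -/
theorem trianglePartition_of_stable_matching
    (q : ℕ) (G : SimpleGraph (Fin (3*q))) [DecidableRel G.Adj]
    (M : Finset (Finset (Agent q)))
    (hM : IsMatching (Finset.univ : Finset (Agent q)) M)
    (hstable : IsStable Finset.univ (redVal q G) M)
    (hcard : M.card = 13 * q) :
    ∃ X, IsTrianglePartition G X := by
  classical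
  have pent := fun r => pentagon_final (G := G) hM hstable hcard r
  choose T pu pv yy hTmem hTeq hpne hy1 hy2 hyp using pent
  -- yy r is never a b-agent
  have hynb : ∀ (r : Fin (6*q)) (i : Fin (3*q)), yy r ≠ Agent.b i := by
    intro r i heq
    have hTeq' : T r = {Agent.p r (pu r), Agent.p r (pv r), Agent.b i} := by
      rw [← heq]; exact hTeq r
    have hbmem : Agent.b i ∈ T r := by rw [hTeq']; simp
    have hub : utility (redVal q G) M (Agent.b i) = 0 := by
      rw [utility_eq_sum (G := G) hM (hTmem r) hbmem, hTeq',
        sum_triple_explicit _ (hpne r) (fun hh => by cases hh)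
          (fun hh => by cases hh)]
      simp [redVal]
    have hspec : ({Agent.a i 0, Agent.a i 1, Agent.b i} : Finset (Agent q)) ∉ M := by
      intro hmem
      have hEq := triple_eq_triple hM hmem (hTmem r)
        (show Agent.b i ∈ ({Agent.a i 0, Agent.a i 1, Agent.b i} : Finset (Agent q)) by simp)
        hbmem
      have hain : Agent.a i 0 ∈ T r := by rw [← hEq]; simp
      rw [hTeq'] at hain
      simp only [Finset.mem_insert, Finset.mem_singleton] at hain
      rcases hain with hb | hb | hb <;> cases hb
    have := b_util_ge (G := G) hM hstable hcard i hspec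
    rw [hub] at this
    linarith
  have hy_a : ∀ r, ∃ i s2, yy r = Agent.a i s2 := by
    intro r
    cases hc : yy r with
    | a i s2 => exact ⟨i, s2, rfl⟩
    | b i => exact absurd hc (hynb r i)
    | p r' t' => exact absurd hc (hyp r r' t')
  choose ai as2 hya using hy_a
  have hyinj : Function.Injective yy := by
    intro r r' h
    by_contra hne'
    have hTne : T r ≠ T r' := by
      intro hEq
      have hmemr : Agent.p r (pu r) ∈ T r' := by rw [← hEq, hTeq r]; simp
      rw [hTeq r'] at hmemr
      simp only [Finset.mem_insert, Finset.mem_singleton, Agent.p.injEq] at hmemr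
      rcases hmemr with ⟨hr, _⟩ | ⟨hr, _⟩ | hr
      · exact hne' hr
      · exact hne' hr
      · exact hyp r' r (pu r) hr.symm
    have h1 : yy r ∈ T r := by rw [hTeq r]; simp
    have h2 : yy r ∈ T r' := by rw [h, hTeq r']; simp
    exact Finset.disjoint_left.mp (hM.2 _ (hTmem r) _ (hTmem r') hTne) h1 h2
  have hbij : Function.Bijective (fun r => (ai r, as2 r) : Fin (6*q) → Fin (3*q) × Fin 2) := by
    rw [Fintype.bijective_iff_injective_and_card]
    constructor
    · intro r r' hEq
      have h1 : ai r = ai r' := congrArg Prod.fst hEq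
      have h2 : as2 r = as2 r' := congrArg Prod.snd hEq
      apply hyinj
      rw [hya r, hya r', h1, h2]
    · simp only [Fintype.card_prod, Fintype.card_fin]
      omega
  have haT : ∀ (i : Fin (3*q)) (s2 : Fin 2), ∃ r, yy r = Agent.a i s2 := by
    intro i s2
    obtain ⟨r, hr⟩ := hbij.2 (i, s2)
    refine ⟨r, ?_⟩
    have h1 : ai r = i := congrArg Prod.fst hr
    have h2 : as2 r = s2 := congrArg Prod.snd hr
    rw [hya r, h1, h2]
  have hbnT : ∀ (r : Fin (6*q)) (i : Fin (3*q)), Agent.b i ∉ T r := by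
    intro r i hb
    rw [hTeq r] at hb
    simp only [Finset.mem_insert, Finset.mem_singleton] at hb
    rcases hb with hb | hb | hb
    · cases hb
    · cases hb
    · exact hynb r i hb.symm
  have hspec : ∀ i : Fin (3*q), ({Agent.a i 0, Agent.a i 1, Agent.b i} : Finset (Agent q)) ∉ M := by
    intro i hmem
    obtain ⟨r, hr⟩ := haT i 0
    have hmemA : Agent.a i 0 ∈ T r := by rw [hTeq r, ← hr]; simp
    have hEq := triple_eq_triple hM hmem (hTmem r) (by simp) hmemA
    exact hbnT r i (by rw [← hEq]; simp)
  have hbT : ∀ i : Fin (3*q), ∃ Tb ∈ M, Agent.b i ∈ Tb ∧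
      ∀ x ∈ Tb, ∃ j, x = Agent.b j ∧ (j = i ∨ G.Adj i j) := by
    intro i
    obtain ⟨Tb, c, d, hTb, hTbeq, h1, h2, h3, hu⟩ := utility_parts (G := G) hM hcard (Agent.b i)
    have hge := b_util_ge (G := G) hM hstable hcard i (hspec i)
    rw [hu] at hge
    have hc1 : 0 < redVal q G (Agent.b i) c := by
      have := redVal_le_one (G := G) (Agent.b i) d; linarith
    have hd1 : 0 < redVal q G (Agent.b i) d := by
      have := redVal_le_one (G := G) (Agent.b i) c; linarith
    have hnota : ∀ (s2 : Fin 2) (x : Agent q), x ∈ Tb → x ≠ Agent.a i s2 := by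
      intro s2 x hx heqa
      obtain ⟨r, hr⟩ := haT i s2
      have hmemA : Agent.a i s2 ∈ T r := by rw [hTeq r, ← hr]; simp
      have hEq : Tb = T r := triple_eq_triple hM hTb (hTmem r) (heqa ▸ hx) hmemA
      exact hbnT r i (by rw [← hEq, hTbeq]; simp)
    have hcb : ∃ j, c = Agent.b j ∧ G.Adj i j := by
      rcases bval_mem hc1 with ⟨s2, rfl⟩ | ⟨j, hadj, rfl⟩
      · exact absurd rfl (hnota s2 _ (by rw [hTbeq]; simp))
      · exact ⟨j, rfl, hadj⟩
    have hdb : ∃ j, d = Agent.b j ∧ G.Adj i j := by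
      rcases bval_mem hd1 with ⟨s2, rfl⟩ | ⟨j, hadj, rfl⟩
      · exact absurd rfl (hnota s2 _ (by rw [hTbeq]; simp))
      · exact ⟨j, rfl, hadj⟩
    obtain ⟨jc, rfl, hadjc⟩ := hcb
    obtain ⟨jd, rfl, hadjd⟩ := hdb
    refine ⟨Tb, hTb, by rw [hTbeq]; simp, ?_⟩
    intro x hx
    rw [hTbeq] at hx
    simp only [Finset.mem_insert, Finset.mem_singleton] at hx
    rcases hx with rfl | rfl | rfl
    · exact ⟨i, rfl, Or.inl rfl⟩
    · exact ⟨jc, rfl, Or.inr hadjc⟩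
    · exact ⟨jd, rfl, Or.inr hadjd⟩
  choose Tb hTbmem hTbself hTball using hbT
  have hTbuni : ∀ i j, Agent.b j ∈ Tb i → Tb j = Tb i := fun i j h =>
    triple_eq_triple hM (hTbmem j) (hTbmem i) (hTbself j) h
  have hgex : ∀ i, ∃ gi : Finset (Fin (3*q)), ∀ v, v ∈ gi ↔ Agent.b v ∈ Tb i := by
    intro i
    refine ⟨(Tb i).biUnion (fun x => match x with | Agent.b j => {j} | _ => ∅), ?_⟩
    intro v
    constructor
    · intro hv
      simp only [Finset.mem_biUnion] at hv
      obtain ⟨x, hx, hvx⟩ := hv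
      cases x with
      | a i' s' => simp at hvx
      | b j =>
        simp only [Finset.mem_singleton] at hvx
        subst hvx
        exact hx
      | p r' t' => simp at hvx
    · intro hb
      simp only [Finset.mem_biUnion]
      exact ⟨Agent.b v, hb, by simp⟩
  choose g hgmem using hgex
  have hgcongr : ∀ i j, Tb i = Tb j → g i = g j := by
    intro i j h
    ext v
    rw [hgmem, hgmem, h]
  have hgcard : ∀ i, (g i).card = 3 := by
    intro i
    obtain ⟨x, y, z, hxy, hxz, hyz, hTeq3⟩ := Finset.card_eq_three.mp (hM.1 _ (hTbmem i)).1
    obtain ⟨jx, hjx, _⟩ := hTball i x (by rw [hTeq3]; simp)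
    obtain ⟨jy, hjy, _⟩ := hTball i y (by rw [hTeq3]; simp)
    obtain ⟨jz, hjz, _⟩ := hTball i z (by rw [hTeq3]; simp)
    subst hjx; subst hjy; subst hjz
    have hgeq : g i = {jx, jy, jz} := by
      ext v
      rw [hgmem, hTeq3]
      simp [Agent.b.injEq]
    rw [hgeq,
      Finset.card_insert_of_notMem (by
        simp only [Finset.mem_insert, Finset.mem_singleton, not_or]
        exact ⟨fun h => hxy (by rw [h]), fun h => hxz (by rw [h])⟩),
      Finset.card_insert_of_notMem (by
        simp only [Finset.mem_singleton]
        exact fun h => hyz (by rw [h])),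
      Finset.card_singleton]
  refine ⟨Finset.image g Finset.univ, ?_, ?_, ?_⟩
  · intro t ht
    obtain ⟨i, _, rfl⟩ := Finset.mem_image.mp ht
    refine ⟨hgcard i, ?_⟩
    intro u hu v hv huv
    rw [hgmem] at hu hv
    have hTu : Tb u = Tb i := hTbuni i u hu
    have hbv : Agent.b v ∈ Tb u := by rw [hTu]; exact hv
    obtain ⟨j, hj, hor⟩ := hTball u _ hbv
    have hjv : j = v := by injection hj with h'; exact h'.symm
    subst hjv
    rcases hor with h | h
    · exact absurd h.symm huv
    · exact h
  · intro t ht s hs hts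
    obtain ⟨i, _, rfl⟩ := Finset.mem_image.mp ht
    obtain ⟨i', _, rfl⟩ := Finset.mem_image.mp hs
    rw [Finset.disjoint_left]
    intro v hv hv'
    rw [hgmem] at hv hv'
    exact hts (hgcongr i i' (by rw [← hTbuni i v hv, hTbuni i' v hv']))
  · intro v
    exact ⟨g v, Finset.mem_image_of_mem g (Finset.mem_univ v), (hgmem v v).mpr (hTbself v)⟩
end
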